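/- Under the run invariant, if c_j < c_s then c_k^{l_k} ⋯ c_{j-1}^{l_{j-1}} c_j^{l_j} ∉ P'. -/

import Mathlib

variable {α : Type*}

/-- The rotation `rot(w,i) = w[i..|w|-1] w[0..i-1]`. -/
def rot (w : List α) (i : ℕ) : List α := w.drop i ++ w.take i

/-- A Lyndon word: a nonempty word strictly smaller than all of its proper rotations. -/
def IsLyndon [LinearOrder α] (w : List α) : Prop :=
  w ≠ [] ∧ ∀ i, 0 < i → i < w.length → w < rot w i

/-- `IsCFL w f` : `f` is the Chen–Fox–Lyndon factorization of `w`, i.e. a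
nonincreasing sequence of Lyndon words whose concatenation is `w`. -/
def IsCFL [LinearOrder α] (w : List α) (f : List (List α)) : Prop :=
  f.flatten = w ∧ (∀ x ∈ f, IsLyndon x) ∧ f.Chain' (· ≥ ·)

/-- `u^k` : the `k`-fold concatenation of the word `u`. -/
def listPow (u : List α) (k : ℕ) : List α := (List.replicate k u).flatten

/-- `P`: the set of nonempty prefixes of Lyndon words. -/
def InP [LinearOrder α] (w : List α) : Prop :=
  w ≠ [] ∧ ∃ u : List α, IsLyndon (w ++ u)

/-- `P' = P ∪ { c^k : k ≥ 2 }` where `c` is the maximum symbol of the alphabet. -/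
def InP' [LinearOrder α] (w : List α) : Prop :=
  InP w ∨ ∃ (c : α) (k : ℕ), 2 ≤ k ∧ (∀ a : α, a ≤ c) ∧ w = List.replicate k c

/-- A border of `w`: a proper prefix of `w` that is also a suffix of `w`. -/
def IsBorder (b w : List α) : Prop := b <+: w ∧ b <:+ w ∧ b.length < w.length

/-- The length of the longest common prefix of two words. -/
def lcpLen [DecidableEq α] : List α → List α → ℕ
  | a :: u, b :: v => if a = b then lcpLen u v + 1 else 0
  | _, _ => 0


/-- The number of runs in the run-length encoding of a word: the length of the
list obtained by collapsing consecutive equal symbols. -/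
def numRuns [DecidableEq α] (w : List α) : ℕ := (w.destutter (· ≠ ·)).length

/-- An LR word: either a Lyndon word or a power `a^k` (`k ≥ 2`) of a single symbol. -/
def IsLR [LinearOrder α] (w : List α) : Prop :=
  IsLyndon w ∨ ∃ (a : α) (k : ℕ), 2 ≤ k ∧ w = List.replicate k a

/-- The word `c_k^{l_k} c_{k+1}^{l_{k+1}} ⋯ c_{j-1}^{l_{j-1}}` determined by the
runs `(c_t, l_t)` for `k ≤ t < j`. -/
def runWord (c : ℕ → α) (l : ℕ → ℕ) (k j : ℕ) : List α :=
  ((List.range (j - k)).map (fun t => List.replicate (l (k + t)) (c (k + t)))).flatten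

open List

lemma runWord_nil (c : ℕ → α) (l : ℕ → ℕ) (k : ℕ) : runWord c l k k = [] := by
  simp [runWord]

lemma runWord_succ (c : ℕ → α) (l : ℕ → ℕ) {k j : ℕ} (h : k ≤ j) :
    runWord c l k (j + 1) = runWord c l k j ++ replicate (l j) (c j) := by
  unfold runWord
  have h1 : j + 1 - k = (j - k) + 1 := by omega
  have h2 : k + (j - k) = j := by omega
  rw [h1, range_succ, map_append, flatten_append]
  simp [h2]

lemma runWord_append (c : ℕ → α) (l : ℕ → ℕ) {a b d : ℕ} (h1 : a ≤ b) (h2 : b ≤ d) :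
    runWord c l a d = runWord c l a b ++ runWord c l b d := by
  induction d, h2 using Nat.le_induction with
  | base => rw [runWord_nil, append_nil]
  | succ d hbd ih =>
      rw [runWord_succ c l (le_trans h1 hbd), runWord_succ c l hbd, ih, append_assoc]

lemma runWord_cons (c : ℕ → α) (l : ℕ → ℕ) {k j : ℕ} (h : k < j) :
    runWord c l k j = replicate (l k) (c k) ++ runWord c l (k + 1) j := by
  rw [runWord_append c l (Nat.le_succ k) h]
  congr 1
  show runWord c l k (k+1) = _
  rw [runWord_succ c l (le_refl k), runWord_nil, nil_append]

lemma runWord_ne_nil {c : ℕ → α} {l : ℕ → ℕ} {k j : ℕ} (h : k < j) (hl : 1 ≤ l k) :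
    runWord c l k j ≠ [] := by
  rw [runWord_cons c l h]
  intro hc
  rcases append_eq_nil_iff.mp hc with ⟨h1, -⟩
  have := congrArg List.length h1
  simp at this
  omega

lemma head?_runWord {c : ℕ → α} {l : ℕ → ℕ} {k j : ℕ} (h : k < j) (hl : 1 ≤ l k) :
    (runWord c l k j).head? = some (c k) := by
  rw [runWord_cons c l h, head?_append]
  obtain ⟨n, hn⟩ : ∃ n, l k = n + 1 := ⟨l k - 1, by omega⟩
  rw [hn, replicate_succ]
  rfl

lemma getLast?_replicate_pos {n : ℕ} (hn : 0 < n) (a : α) :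
    (replicate n a).getLast? = some a := by
  obtain ⟨m, rfl⟩ : ∃ m, n = m + 1 := ⟨n - 1, by omega⟩
  rw [replicate_succ', getLast?_concat]

lemma getLast?_runWord {c : ℕ → α} {l : ℕ → ℕ} {k j : ℕ} (h : k < j) (hl : 1 ≤ l (j - 1)) :
    (runWord c l k j).getLast? = some (c (j - 1)) := by
  obtain ⟨m, rfl⟩ : ∃ m, j = m + 1 := ⟨j - 1, by omega⟩
  rw [runWord_succ c l (by omega), getLast?_append, getLast?_replicate_pos (by have := hl; simp at this; omega)]
  rfl

lemma mem_runWord {c : ℕ → α} {l : ℕ → ℕ} {t k j : ℕ} (h1 : k ≤ t) (h2 : t < j)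
    (hl : 1 ≤ l t) : c t ∈ runWord c l k j := by
  rw [runWord_append c l h1 (le_of_lt h2), runWord_cons c l h2]
  refine mem_append.mpr (Or.inr (mem_append.mpr (Or.inl ?_)))
  exact mem_replicate.mpr ⟨by omega, rfl⟩

section NumRuns
variable [DecidableEq α]

lemma destutter'_skip (a : α) (n : ℕ) (L : List α) :
    destutter' (· ≠ ·) a (replicate n a ++ L) = destutter' (· ≠ ·) a L := by
  induction n with
  | zero => rfl
  | succ m ih =>
      rw [replicate_succ, cons_append, destutter'_cons]
      simpa using ih

lemma numRuns_replicate_append {n : ℕ} (hn : 0 < n) (a : α) (L : List α)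
    (hL : ∀ x ∈ L.head?, x ≠ a) : numRuns (replicate n a ++ L) = numRuns L + 1 := by
  obtain ⟨m, rfl⟩ : ∃ m, n = m + 1 := ⟨n - 1, by omega⟩
  rw [replicate_succ, cons_append, numRuns, destutter_cons', destutter'_skip]
  cases L with
  | nil => simp [numRuns]
  | cons b L' =>
      have hb : b ≠ a := hL b rfl
      rw [destutter'_cons]
      simp only [Ne.symm hb, if_pos, ne_eq, not_false_eq_true]
      simp [numRuns, destutter_cons']

lemma numRuns_nil : numRuns ([] : List α) = 0 := rfl

end NumRuns

lemma head?_replicate_pos {n : ℕ} (hn : 0 < n) (a : α) : (replicate n a).head? = some a := by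
  obtain ⟨m, rfl⟩ : ∃ m, n = m + 1 := ⟨n - 1, by omega⟩
  rw [replicate_succ]; rfl

lemma head?_runWord_rep {c : ℕ → α} {l : ℕ → ℕ} {k u m : ℕ} (hku : k ≤ u) (hm : 0 < m)
    (hl : k < u → 1 ≤ l k) :
    (runWord c l k u ++ replicate m (c u)).head? = some (c k) := by
  rcases eq_or_lt_of_le hku with rfl | hlt
  · rw [runWord_nil, nil_append, head?_replicate_pos hm]
  · rw [head?_append, head?_runWord hlt (hl hlt)]
    rfl

lemma numRuns_form_aux [DecidableEq α] (c : ℕ → α) (l : ℕ → ℕ) :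
    ∀ (n k m : ℕ), (∀ t, k ≤ t → t < k + n → 1 ≤ l t) →
      (∀ t, k ≤ t → t < k + n → c t ≠ c (t + 1)) → 0 < m →
      numRuns (runWord c l k (k + n) ++ replicate m (c (k + n))) = n + 1 := by
  intro n
  induction n with
  | zero =>
      intro k m _ _ hm
      rw [Nat.add_zero, runWord_nil, nil_append, ← append_nil (replicate m (c k)),
        numRuns_replicate_append hm _ _ (by simp), numRuns_nil]
  | succ n ih =>
      intro k m hl hc hm
      have hk1 : k + (n + 1) = (k + 1) + n := by omega
      rw [runWord_cons c l (by omega : k < k + (n + 1)), append_assoc, hk1,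
        numRuns_replicate_append (hl k le_rfl (by omega)) _ _ ?_,
        ih (k + 1) m (fun t h1 h2 => hl t (by omega) (by omega))
          (fun t h1 h2 => hc t (by omega) (by omega)) hm]
      intro x hx
      rw [head?_runWord_rep (by omega) hm (fun h => hl (k + 1) (by omega) (by omega))] at hx
      have hxx : x = c (k + 1) := by injection hx with h; exact h.symm
      rw [hxx]
      exact Ne.symm (hc k le_rfl (by omega))

lemma prefix_runWord (c : ℕ → α) (l : ℕ → ℕ) :
    ∀ (n : ℕ) {k : ℕ} {b : List α}, b ≠ [] → b <+: runWord c l k (k + n) →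
      (∀ t, k ≤ t → t < k + n → 1 ≤ l t) →
      ∃ q m, k ≤ q ∧ q < k + n ∧ 0 < m ∧ m ≤ l q ∧
        b = runWord c l k q ++ replicate m (c q) := by
  intro n
  induction n with
  | zero =>
      intro k b hne hpre _
      rw [Nat.add_zero, runWord_nil] at hpre
      exact absurd (prefix_nil.mp hpre) hne
  | succ n ih =>
      intro k b hne hpre hl
      have hbt : b = take b.length (runWord c l k (k + (n + 1))) :=
        (prefix_iff_eq_take.mp hpre)
      rw [runWord_cons c l (by omega : k < k + (n + 1)),
        take_append, take_replicate] at hbt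
      simp only [length_replicate] at hbt
      by_cases hble : b.length ≤ l k
      · refine ⟨k, b.length, le_rfl, by omega, length_pos_iff.mpr hne, hble, ?_⟩
        rw [runWord_nil, nil_append]
        rw [min_eq_left hble, Nat.sub_eq_zero_of_le hble, take_zero, append_nil] at hbt
        exact hbt
      · push_neg at hble
        rw [min_eq_right (le_of_lt hble)] at hbt
        set b₂ := take (b.length - l k) (runWord c l (k + 1) (k + (n + 1))) with hb₂
        have hb2pre : b₂ <+: runWord c l (k + 1) (k + (n + 1)) := take_prefix _ _
        have hb2ne : b₂ ≠ [] := by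
          intro hcon
          rw [hcon, append_nil] at hbt
          have := congrArg List.length hbt
          simp at this
          omega
        have hk1 : k + (n + 1) = (k + 1) + n := by omega
        rw [hk1] at hb2pre
        obtain ⟨q, m, hq1, hq2, hm1, hm2, hb2⟩ :=
          ih hb2ne hb2pre (fun t h1 h2 => hl t (by omega) (by omega))
        refine ⟨q, m, by omega, by omega, hm1, hm2, ?_⟩
        rw [hbt, hb2, runWord_cons c l (by omega : k < q), append_assoc]

lemma le_of_replicate_prefix {m n : ℕ} {a : α} {L : List α}
    (h : replicate m a <+: replicate n a ++ L) (hL : ∀ x ∈ L.head?, x ≠ a) : m ≤ n := by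
  by_contra hc
  push_neg at hc
  have h1 : replicate n a ++ replicate (m - n) a <+: replicate n a ++ L := by
    rw [← replicate_add]
    have : n + (m - n) = m := by omega
    rw [this]; exact h
  have h2 : replicate (m - n) a <+: L := (prefix_append_right_inj _).mp h1
  obtain ⟨r, hr⟩ := h2
  have : L.head? = some a := by
    rw [← hr]
    obtain ⟨p, hp⟩ : ∃ p, m - n = p + 1 := ⟨m - n - 1, by omega⟩
    rw [hp, replicate_succ]; rfl
  exact hL a this rfl

lemma getLast?_of_ne_nil {b : List α} (hb : b ≠ []) : ∃ x, b.getLast? = some x := by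
  cases b with
  | nil => exact absurd rfl hb
  | cons a t => exact ⟨(a :: t).getLast (by simp), getLast?_eq_getLast _⟩

lemma last_run_eq {P Q : List α} {m n : ℕ} {a d : α} (hm : 0 < m) (hn : 0 < n)
    (hP : ∀ x ∈ P.getLast?, x ≠ a) (hQ : ∀ x ∈ Q.getLast?, x ≠ d)
    (h : P ++ replicate m a = Q ++ replicate n d) : a = d ∧ P = Q ∧ m = n := by
  have had : a = d := by
    have h1 := congrArg List.getLast? h
    rw [List.getLast?_append_of_ne_nil _ (by intro hc; have := congrArg List.length hc; simp at this; omega), List.getLast?_append_of_ne_nil _ (by intro hc; have := congrArg List.length hc; simp at this; omega),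
      getLast?_replicate_pos hm, getLast?_replicate_pos hn] at h1
    injection h1
  subst had
  rcases le_total m n with hle | hle
  · have hrep : replicate n a = replicate (n - m) a ++ replicate m a := by
      rw [← replicate_add]
      congr 1
      omega
    rw [hrep, ← append_assoc] at h
    have hPQ : P = Q ++ replicate (n - m) a := append_cancel_right h
    rcases Nat.eq_or_lt_of_le hle with heq | hlt
    · subst heq
      simp at hPQ
      exact ⟨rfl, hPQ, rfl⟩
    · exfalso
      have : P.getLast? = some a := by
        rw [hPQ, List.getLast?_append_of_ne_nil _ (by intro hc; have := congrArg List.length hc; simp at this; omega), getLast?_replicate_pos (by omega)]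
      exact hP a this rfl
  · have hrep : replicate m a = replicate (m - n) a ++ replicate n a := by
      rw [← replicate_add]
      congr 1
      omega
    rw [hrep, ← append_assoc] at h
    have hQP : Q = P ++ replicate (m - n) a := (append_cancel_right h).symm
    rcases Nat.eq_or_lt_of_le hle with heq | hlt
    · subst heq
      simp at hQP
      exact ⟨rfl, hQP.symm, rfl⟩
    · exfalso
      have : Q.getLast? = some a := by
        rw [hQP, List.getLast?_append_of_ne_nil _ (by intro hc; have := congrArg List.length hc; simp at this; omega), getLast?_replicate_pos (by omega)]
      exact hQ a this rfl

lemma suffix_short {b X Y : List α} (h : b <:+ X ++ Y) (hlen : b.length ≤ Y.length) :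
    b <:+ Y := by
  obtain ⟨Z, hZ⟩ := h
  have hlZ : X.length ≤ Z.length := by
    have := congrArg List.length hZ
    simp at this
    omega
  have hY : Y = drop X.length (Z ++ b) := by
    rw [hZ, drop_left]
  rw [drop_append, Nat.sub_eq_zero_of_le hlZ, drop_zero] at hY
  exact ⟨drop X.length Z, hY.symm⟩

lemma suffix_split {b X Y : List α} (h : b <:+ X ++ Y) (hlen : Y.length < b.length) :
    ∃ W, W <:+ X ∧ W ≠ [] ∧ b = W ++ Y := by
  obtain ⟨Z, hZ⟩ := h
  have hlZ : Z.length < X.length := by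
    have := congrArg List.length hZ
    simp at this
    omega
  refine ⟨drop Z.length X, drop_suffix _ _, ?_, ?_⟩
  · intro hcon
    have := congrArg List.length hcon
    simp at this
    omega
  · have hX : X = take Z.length X ++ drop Z.length X := (take_append_drop _ _).symm
    rw [hX, append_assoc] at hZ
    have hlen2 : Z.length = (take Z.length X).length := by
      simp
      omega
    exact (append_inj hZ hlen2).2

lemma lt_append_cons [LinearOrder α] {e d : α} (h : e < d) (p y z : List α) :
    p ++ e :: y < p ++ d :: z := by
  show List.Lex (· < ·) _ _
  induction p with
  | nil => exact List.Lex.rel h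
  | cons a p ih => exact List.Lex.cons ih

lemma not_inP'_of_bad [LinearOrder α] {w bb tl : List α} {d e : α} (hed : e < d)
    (hu : bb ++ [d] <+: w) (hv : bb ++ e :: tl <:+ w)
    (hlen : bb.length + 1 + tl.length < w.length) : ¬ InP' w := by
  rintro (⟨hne, x, hx⟩ | ⟨cc, kk, hk2, hmax, hrep⟩)
  · obtain ⟨hLne, hLy⟩ := hx
    set v := bb ++ e :: tl with hvdef
    obtain ⟨Z, hZ⟩ := hv
    set t := Z.length with ht
    have hvlen : v.length = bb.length + 1 + tl.length := by simp [hvdef]; omega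
    have htw : t + v.length = w.length := by rw [← hZ]; simp [ht]
    have ht0 : 0 < t := by omega
    have htL : t < (w ++ x).length := by simp; omega
    have h1 := hLy t ht0 htL
    have hrot : rot (w ++ x) t = v ++ (x ++ take t (w ++ x)) := by
      rw [rot]
      have hd : drop t (w ++ x) = v ++ x := by
        rw [drop_append, Nat.sub_eq_zero_of_le (by omega), drop_zero]
        congr 1
        rw [← hZ, ht, drop_left]
      rw [hd, append_assoc]
    obtain ⟨r, hr⟩ := hu
    have hL2 : w ++ x = bb ++ d :: (r ++ x) := by rw [← hr]; simp
    have hrot2 : rot (w ++ x) t = bb ++ e :: (tl ++ (x ++ take t (w ++ x))) := by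
      rw [hrot, hvdef]; simp
    have h2 : rot (w ++ x) t < w ++ x := by
      rw [hrot2, hL2]; exact lt_append_cons hed _ _ _
    exact absurd h2 (not_lt_of_gt h1)
  · subst hrep
    have hd : d ∈ replicate kk cc := hu.subset (by simp)
    have he : e ∈ replicate kk cc := hv.subset (by simp)
    rw [eq_of_mem_replicate hd, eq_of_mem_replicate he] at hed
    exact lt_irrefl _ hed

lemma singleton_prefix_of_head? {L : List α} {a : α} (h : L.head? = some a) : [a] <+: L := by
  cases L with
  | nil => simp at h
  | cons x t =>
      have : x = a := by injection h
      subst this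
      exact ⟨t, rfl⟩

lemma replicate_prefix_rep_append {m n : ℕ} {a : α} (h : m ≤ n) (L : List α) :
    replicate m a <+: replicate n a ++ L := by
  have : replicate n a = replicate m a ++ replicate (n - m) a := by
    rw [← replicate_add]; congr 1; omega
  rw [this, append_assoc]
  exact prefix_append _ _

lemma rep_suffix_append_rep {m n : ℕ} {a : α} (h : m ≤ n) (L : List α) :
    replicate m a <:+ L ++ replicate n a := by
  have : replicate n a = replicate (n - m) a ++ replicate m a := by
    rw [← replicate_add]; congr 1; omega
  rw [this, ← append_assoc]
  exact suffix_append _ _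

/-- Under the run invariant, if `c_j < c_s` then
`c_k^{l_k} ⋯ c_{j-1}^{l_{j-1}} c_j^{l_j} ∉ P'`. -/
theorem rle_next_case1 [LinearOrder α] (c : ℕ → α) (l : ℕ → ℕ) (k j : ℕ) (hkj : k < j)
    (hlpos : ∀ t, k ≤ t → t ≤ j → 1 ≤ l t)
    (hcne : ∀ t, k ≤ t → t < j → c t ≠ c (t + 1))
    (hP' : InP' (runWord c l k j))
    (b : List α) (hb : IsBorder b (runWord c l k j))
    (hbmax : ∀ b' : List α, IsBorder b' (runWord c l k j) → b'.length ≤ b.length)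
    (ℓ i z s : ℕ)
    (hℓ : ℓ = if 1 < j - k then numRuns b else 0)
    (hi : i = k + ℓ)
    (hz : z = if 0 < ℓ ∧ l (j - 1) < l (i - 1) then 1 else 0)
    (hs : s = i - z)
    (hlt : c j < c s) :
    ¬ InP' (runWord c l k (j + 1)) := by
  obtain ⟨hbpre, hbsuf, hblt⟩ := hb
  have hw : runWord c l k (j + 1) = runWord c l k j ++ replicate (l j) (c j) :=
    runWord_succ c l (le_of_lt hkj)
  have hlj : 1 ≤ l j := hlpos j (le_of_lt hkj) le_rfl
  suffices hK : b ++ [c s] <+: runWord c l k (j + 1) by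
    obtain ⟨lj', hlj'⟩ : ∃ p, l j = p + 1 := ⟨l j - 1, by omega⟩
    refine not_inP'_of_bad (tl := replicate lj' (c j)) hlt hK ?_ ?_
    · obtain ⟨Z, hZ⟩ := hbsuf
      refine ⟨Z, ?_⟩
      rw [hw, ← hZ, append_assoc]
      congr 1
      rw [hlj', replicate_succ]
    · have h1 := congrArg List.length hw
      simp only [length_append, length_replicate] at h1
      simp only [length_replicate]
      omega
  -- Now prove the key prefix fact.
  by_cases hbnil : b = []
  · -- empty border: s = k
    have hl0 : ℓ = 0 := by
      rw [hℓ, hbnil]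
      simp [numRuns, destutter_nil]
    have hz0 : z = 0 := by rw [hz, if_neg]; omega
    have hsk : s = k := by omega
    rw [hbnil, nil_append, hsk]
    exact singleton_prefix_of_head? (head?_runWord (by omega) (hlpos k le_rfl (by omega)))
  · by_cases hjk1 : j = k + 1
    · -- single run: s = k, b = replicate |b| (c k)
      subst hjk1
      have hl0 : ℓ = 0 := by rw [hℓ, if_neg]; omega
      have hz0 : z = 0 := by rw [hz, if_neg]; omega
      have hsk : s = k := by omega
      have hrw : runWord c l k (k + 1) = replicate (l k) (c k) := by
        rw [runWord_succ c l le_rfl, runWord_nil, nil_append]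
      rw [hrw] at hbpre hblt
      have hbrep : b = replicate b.length (c k) := by
        have := prefix_iff_eq_take.mp hbpre
        rw [take_replicate, min_eq_left (by simpa using hbpre.length_le)] at this
        exact this
      have hblen : b.length < l k := by simpa using hblt
      rw [hsk, hbrep, ← replicate_succ']
      calc replicate (b.length + 1) (c k) <+: replicate (l k) (c k) ++ runWord c l (k + 1) (k + 1 + 1) :=
            replicate_prefix_rep_append (by omega) _
        _ = runWord c l k (k + 1 + 1) := by rw [← runWord_cons c l (by omega)]
    · -- at least two runs in w'
      have hjk2 : k + 2 ≤ j := by omega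
      have hℓval : ℓ = numRuns b := by rw [hℓ, if_pos (by omega)]
      obtain ⟨q, m, hq1, hq2, hm1, hm2, hbform⟩ :=
        prefix_runWord c l (j - k) hbnil
          (by rw [show k + (j - k) = j from by omega]; exact hbpre)
          (fun t h1 h2 => hlpos t h1 (by omega))
      rw [show k + (j - k) = j from by omega] at hq2
      have hnr : numRuns b = (q - k) + 1 := by
        rw [hbform]
        have := numRuns_form_aux c l (q - k) k m
          (fun t h1 h2 => hlpos t h1 (by omega))
          (fun t h1 h2 => hcne t h1 (by omega)) hm1
        rw [show k + (q - k) = q from by omega] at this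
        exact this
      have hiq : i = q + 1 := by rw [hi, hℓval, hnr]; omega
      have hlpos' : 0 < ℓ := by rw [hℓval, hnr]; omega
      have hB1 : 1 ≤ l (j - 1) := hlpos (j - 1) (by omega) (by omega)
      have hw' : runWord c l k j = runWord c l k (j - 1) ++ replicate (l (j - 1)) (c (j - 1)) := by
        have := runWord_succ c l (show k ≤ j - 1 by omega)
        rw [show j - 1 + 1 = j from by omega] at this
        exact this
      have hXne : runWord c l k (j - 1) ≠ [] :=
        runWord_ne_nil (by omega) (hlpos k le_rfl (by omega))
      have hXlast : (runWord c l k (j - 1)).getLast? = some (c (j - 2)) := by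
        have h1 : 1 ≤ l (j - 1 - 1) := by
          rw [show j - 1 - 1 = j - 2 from by omega]
          exact hlpos (j - 2) (by omega) (by omega)
        rw [getLast?_runWord (by omega) h1, show j - 1 - 1 = j - 2 from by omega]
      have hc21 : c (j - 2) ≠ c (j - 1) := by
        have := hcne (j - 2) (by omega) (by omega)
        rw [show j - 2 + 1 = j - 1 from by omega] at this
        exact this
      rcases Nat.eq_or_lt_of_le hq1 with hqk | hqk
      · -- ℓ = 1 : b = replicate m (c k)
        subst hqk
        rw [runWord_nil, nil_append] at hbform
        have hck : c k = c (j - 1) := by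
          obtain ⟨Z, hZ⟩ := hbsuf
          have h1 : (runWord c l k j).getLast? = b.getLast? := by
            rw [← hZ]
            exact List.getLast?_append_of_ne_nil _ hbnil
          rw [getLast?_runWord hkj hB1, hbform, getLast?_replicate_pos hm1] at h1
          injection h1 with h1
          exact h1.symm
        have hmB : m ≤ l (j - 1) := by
          have hrs := hbsuf
          rw [hw'] at hrs
          have hrev := hrs.reverse
          rw [reverse_append, reverse_replicate, hbform, hck, reverse_replicate] at hrev
          refine le_of_replicate_prefix hrev ?_
          intro x hx
          rw [head?_reverse, hXlast] at hx
          have hxx : x = c (j - 2) := by injection hx with h; exact h.symm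
          rw [hxx]
          exact hc21
        have hkey : m = l (j - 1) ∨ m = l k := by
          by_contra hcon
          push_neg at hcon
          have hbord : IsBorder (replicate (m + 1) (c k)) (runWord c l k j) := by
            refine ⟨?_, ?_, ?_⟩
            · calc replicate (m + 1) (c k)
                  <+: replicate (l k) (c k) ++ runWord c l (k + 1) j :=
                    replicate_prefix_rep_append (by omega) _
                _ = runWord c l k j := (runWord_cons c l hkj).symm
            · rw [hw', hck]
              exact rep_suffix_append_rep (by omega) _
            · rw [hw']
              have hX : 0 < (runWord c l k (j - 1)).length := length_pos_iff.mpr hXne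
              simp only [length_append, length_replicate]
              omega
          have hle := hbmax _ hbord
          rw [hbform] at hle
          simp only [length_replicate] at hle
          omega
        by_cases hBA : l (j - 1) < l k
        · have hzval : z = 1 := by
            rw [hz, if_pos ⟨hlpos', by rw [hiq]; simpa using hBA⟩]
          have hsval : s = k := by omega
          have hmBeq : m = l (j - 1) := by
            rcases hkey with h | h
            · exact h
            · omega
          rw [hsval, hbform, ← replicate_succ']
          calc replicate (m + 1) (c k)
              <+: replicate (l k) (c k) ++ runWord c l (k + 1) (j + 1) :=
                replicate_prefix_rep_append (by omega) _
            _ = runWord c l k (j + 1) := (runWord_cons c l (by omega)).symm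
        · have hneg : ¬(0 < ℓ ∧ l (j - 1) < l (i - 1)) := by
            rw [hiq]
            simp only [Nat.add_sub_cancel]
            rintro ⟨-, h2⟩
            exact hBA h2
          have hzval : z = 0 := by rw [hz, if_neg hneg]
          have hsval : s = k + 1 := by omega
          push_neg at hBA
          have hmA : m = l k := by
            rcases hkey with h | h
            · omega
            · exact h
          have hbrw : b = runWord c l k (k + 1) := by
            rw [hbform, hmA, runWord_succ c l le_rfl, runWord_nil, nil_append]
          rw [hsval, hbrw]
          have hsplit : runWord c l k (j + 1)
              = runWord c l k (k + 1) ++ runWord c l (k + 1) (j + 1) :=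
            runWord_append c l (by omega) (by omega)
          rw [hsplit]
          refine (prefix_append_right_inj _).mpr ?_
          exact singleton_prefix_of_head?
            (head?_runWord (by omega) (hlpos (k + 1) (by omega) (by omega)))
      · -- ℓ ≥ 2 : k < q
        have hQlast : (runWord c l k q).getLast? = some (c (q - 1)) :=
          getLast?_runWord hqk (hlpos (q - 1) (by omega) (by omega))
        have hQne : c (q - 1) ≠ c q := by
          have := hcne (q - 1) (by omega) (by omega)
          rw [show q - 1 + 1 = q from by omega] at this
          exact this
        have hsuf0 : b <:+ runWord c l k (j - 1) ++ replicate (l (j - 1)) (c (j - 1)) := by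
          rw [← hw']
          exact hbsuf
        rcases le_or_gt b.length (l (j - 1)) with hlB | hlB
        · -- impossible: b would be constant
          exfalso
          have hsuf2 : b <:+ replicate (l (j - 1)) (c (j - 1)) :=
            suffix_short hsuf0 (by simpa using hlB)
          have hconst : ∀ x ∈ b, x = c (j - 1) := fun x hx =>
            eq_of_mem_replicate (hsuf2.subset hx)
          have hkmem : c k ∈ b := by
            rw [hbform]
            exact mem_append.mpr (Or.inl (mem_runWord le_rfl hqk (hlpos k le_rfl (by omega))))
          have hk1mem : c (k + 1) ∈ b := by
            rw [hbform]
            rcases Nat.lt_or_ge (k + 1) q with h | h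
            · exact mem_append.mpr
                (Or.inl (mem_runWord (by omega) h (hlpos (k + 1) (by omega) (by omega))))
            · have hq : k + 1 = q := by omega
              rw [← hq]
              exact mem_append.mpr (Or.inr (mem_replicate.mpr ⟨by omega, rfl⟩))
          exact hcne k le_rfl (by omega) ((hconst _ hkmem).trans (hconst _ hk1mem).symm)
        · obtain ⟨W, hWsuf, hWne, hbW⟩ := suffix_split hsuf0 (by simpa using hlB)
          have hWlast : W.getLast? = some (c (j - 2)) := by
            obtain ⟨Z, hZ⟩ := hWsuf
            rw [← hXlast, ← hZ]
            exact (List.getLast?_append_of_ne_nil _ hWne).symm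
          have hP : ∀ x ∈ (runWord c l k q).getLast?, x ≠ c q := by
            intro x hx
            rw [hQlast] at hx
            have hxx : x = c (q - 1) := by injection hx with h; exact h.symm
            rw [hxx]
            exact hQne
          have hQ : ∀ x ∈ W.getLast?, x ≠ c (j - 1) := by
            intro x hx
            rw [hWlast] at hx
            have hxx : x = c (j - 2) := by injection hx with h; exact h.symm
            rw [hxx]
            exact hc21
          obtain ⟨hcq, hPQ, hmB⟩ :=
            last_run_eq hm1 (show 0 < l (j - 1) by omega) hP hQ (hbform.symm.trans hbW)
          by_cases hBA : l (j - 1) < l q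
          · have hzval : z = 1 := by
              rw [hz, if_pos ⟨hlpos', by rw [hiq]; simpa using hBA⟩]
            have hsval : s = q := by omega
            rw [hsval, hbform, append_assoc, ← replicate_succ']
            have hsplit : runWord c l k (j + 1)
                = runWord c l k q ++ (replicate (l q) (c q) ++ runWord c l (q + 1) (j + 1)) := by
              rw [runWord_append c l (le_of_lt hqk) (by omega : q ≤ j + 1),
                runWord_cons c l (by omega : q < j + 1)]
            rw [hsplit]
            refine (prefix_append_right_inj _).mpr ?_
            exact replicate_prefix_rep_append (by omega) _
          · have hneg : ¬(0 < ℓ ∧ l (j - 1) < l (i - 1)) := by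
              rw [hiq]
              simp only [Nat.add_sub_cancel]
              rintro ⟨-, h2⟩
              exact hBA h2
            have hzval : z = 0 := by rw [hz, if_neg hneg]
            have hsval : s = q + 1 := by omega
            push_neg at hBA
            have hmA : m = l q := by omega
            have hbrw : b = runWord c l k (q + 1) := by
              rw [hbform, hmA, runWord_succ c l (le_of_lt hqk)]
            rw [hsval, hbrw]
            have hsplit : runWord c l k (j + 1)
                = runWord c l k (q + 1) ++ runWord c l (q + 1) (j + 1) :=
              runWord_append c l (by omega) (by omega)
            rw [hsplit]
            refine (prefix_append_right_inj _).mpr ?_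
            exact singleton_prefix_of_head?
              (head?_runWord (by omega) (hlpos (q + 1) (by omega) (by omega)))
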